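/- Let β₁,…,β_N > 0 and let (Z_n) be a sequence of nonnegative reals satisfying Z_{n+1} ≤ C · bⁿ · (1/N) · Σ_{i=1}^N Z_n^{1+β_i} for all n ≥ 0, where C, b > 1. Set β = min{β₁,…,β_N}. If Z₀ ≤ C^{-1/β} · b^{-1/β²}, then Z_n → 0 as n → ∞. -/

import Mathlib

open Filter

theorem degiorgi_iteration_multi
    (N : ℕ) (hN : 1 ≤ N) (β : Fin N → ℝ) (hβ : ∀ i, 0 < β i)
    (C b : ℝ) (hC : 1 < C) (hb : 1 < b)
    (Z : ℕ → ℝ) (hZ : ∀ n, 0 ≤ Z n)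
    (hrec : ∀ n, Z (n + 1) ≤ C * b ^ n * ((1 : ℝ) / N) * ∑ i, Z n ^ (1 + β i))
    (βm : ℝ) (hβm_le : ∀ i, βm ≤ β i) (hβm_mem : ∃ i, β i = βm)
    (h0 : Z 0 ≤ C ^ (-(1 / βm)) * b ^ (-(1 / βm ^ 2))) :
    Tendsto Z atTop (nhds 0) := by
  have hβm : 0 < βm := by obtain ⟨i, hi⟩ := hβm_mem; rw [← hi]; exact hβ i
  have hC0 : (0:ℝ) < C := lt_trans one_pos hC
  have hb0 : (0:ℝ) < b := lt_trans one_pos hb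
  have hexp : -(1/βm) < 0 := neg_lt_zero.mpr (by positivity)
  have hexp2 : -(1/βm^2) ≤ 0 := le_of_lt (neg_lt_zero.mpr (by positivity))
  set r : ℝ := b ^ (-(1/βm)) with hr
  have hr0 : 0 < r := Real.rpow_pos_of_pos hb0 _
  have hr1 : r < 1 := Real.rpow_lt_one_of_one_lt_of_neg hb hexp
  set A : ℝ := C ^ (-(1/βm)) * b ^ (-(1/βm^2)) with hA
  have hA0 : 0 < A := mul_pos (Real.rpow_pos_of_pos hC0 _) (Real.rpow_pos_of_pos hb0 _)
  have hA1 : A ≤ 1 := by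
    have h1 : C ^ (-(1/βm)) ≤ 1 :=
      Real.rpow_le_one_of_one_le_of_nonpos hC.le hexp.le
    have h2 : b ^ (-(1/βm^2)) ≤ 1 :=
      Real.rpow_le_one_of_one_le_of_nonpos hb.le hexp2
    calc A ≤ 1 * 1 := mul_le_mul h1 h2 (Real.rpow_pos_of_pos hb0 _).le zero_le_one
    _ = 1 := mul_one 1
  have hN0 : (0:ℝ) < (N:ℝ) := by exact_mod_cast Nat.lt_of_lt_of_le Nat.zero_lt_one hN
  have key : ∀ n, Z n ≤ A * r ^ n := by
    intro n
    induction n with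
    | zero => simpa using h0
    | succ n ih =>
      have hrn1 : r ^ n ≤ 1 := pow_le_one₀ hr0.le hr1.le
      have hZn1 : Z n ≤ 1 := ih.trans (by nlinarith)
      have hterm : ∀ i : Fin N, Z n ^ (1 + β i) ≤ Z n ^ (1 + βm) := by
        intro i
        rcases eq_or_lt_of_le (hZ n) with h0' | h0'
        · rw [← h0', Real.zero_rpow (by have := hβ i; positivity),
            Real.zero_rpow (by positivity)]
        · exact Real.rpow_le_rpow_of_exponent_ge h0' hZn1 (by linarith [hβm_le i])
      have hsum : ∑ i, Z n ^ (1 + β i) ≤ (N:ℝ) * Z n ^ (1 + βm) := by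
        calc ∑ i, Z n ^ (1 + β i) ≤ ∑ _i : Fin N, Z n ^ (1 + βm) :=
              Finset.sum_le_sum (fun i _ => hterm i)
        _ = (N:ℝ) * Z n ^ (1 + βm) := by simp [Finset.sum_const]
      have step1 : Z (n+1) ≤ C * b ^ n * Z n ^ (1 + βm) := by
        have := hrec n
        calc Z (n+1) ≤ C * b ^ n * ((1:ℝ)/N) * ∑ i, Z n ^ (1 + β i) := hrec n
        _ ≤ C * b ^ n * ((1:ℝ)/N) * ((N:ℝ) * Z n ^ (1 + βm)) := by
              apply mul_le_mul_of_nonneg_left hsum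
              positivity
        _ = C * b ^ n * Z n ^ (1 + βm) := by field_simp
      have step2 : Z n ^ (1 + βm) ≤ (A * r ^ n) ^ (1 + βm) :=
        Real.rpow_le_rpow (hZ n) ih (by linarith)
      have eqkey : C * b ^ n * (A * r ^ n) ^ (1 + βm) = A * r ^ (n + 1) := by
        have hL : 0 < C * b ^ n * (A * r ^ n) ^ (1 + βm) := by positivity
        have hR : 0 < A * r ^ (n + 1) := by positivity
        rw [← Real.exp_log hL, ← Real.exp_log hR]
        congr 1
        have lA : Real.log A = -(1/βm) * Real.log C + -(1/βm^2) * Real.log b := by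
          rw [hA, Real.log_mul (by positivity) (by positivity),
            Real.log_rpow hC0, Real.log_rpow hb0]
        have lr : Real.log r = -(1/βm) * Real.log b := by
          rw [hr, Real.log_rpow hb0]
        rw [Real.log_mul (by positivity) (by positivity),
          Real.log_mul (by positivity) (by positivity),
          Real.log_mul (by positivity) (by positivity),
          Real.log_rpow (by positivity), Real.log_mul (by positivity) (by positivity),
          Real.log_pow, Real.log_pow, lA, lr]
        have hβm' : βm ≠ 0 := hβm.ne'
        field_simp
        rw [Real.log_pow, lr]
        field_simp
        push_cast
        ring
      calc Z (n+1) ≤ C * b ^ n * Z n ^ (1 + βm) := step1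
      _ ≤ C * b ^ n * (A * r ^ n) ^ (1 + βm) :=
          mul_le_mul_of_nonneg_left step2 (by positivity)
      _ = A * r ^ (n + 1) := eqkey
  have hlim : Tendsto (fun n => A * r ^ n) atTop (nhds 0) := by
    have := (tendsto_pow_atTop_nhds_zero_of_lt_one hr0.le hr1).const_mul A
    simpa using this
  exact squeeze_zero hZ key hlim
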